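/- Let (X_1,…,X_n) be an exchangeable random vector with order statistics (Y_1,…,Y_n), and let g : ℝ^n → ℝ be Borel measurable with E|g(X_1,…,X_n)| < ∞. Then for every event A in the σ-field σ(Y_1,…,Y_n), one has ∫_A g(X_1,…,X_n) dP = (1/n!) Σ_π ∫_A g(Y_{π(1)},…,Y_{π(n)}) dP, where the sum runs over all n! permutations π of {1,…,n}. -/
import Mathlib

open MeasureTheory

/-- The sorting map: rearranges the coordinates of `x : Fin n → ℝ` in nondecreasing order. -/
noncomputable def sortVec {n : ℕ} (x : Fin n → ℝ) : Fin n → ℝ :=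
  x ∘ Tuple.sort x

lemma measurableSet_sort_eq {n : ℕ} (σ : Equiv.Perm (Fin n)) :
    MeasurableSet {x : Fin n → ℝ | Tuple.sort x = σ} := by
  have h : {x : Fin n → ℝ | Tuple.sort x = σ} =
      (⋂ i, ⋂ j, ⋂ _ : i ≤ j, {x : Fin n → ℝ | x (σ i) ≤ x (σ j)}) ∩
      (⋂ i, ⋂ j, ⋂ _ : i < j, {x : Fin n → ℝ | x (σ i) = x (σ j) → σ i < σ j}) := by
    ext x
    simp only [Set.mem_setOf_eq, Set.mem_inter_iff, Set.mem_iInter]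
    rw [eq_comm, Tuple.eq_sort_iff]
    constructor
    · rintro ⟨h1, h2⟩
      exact ⟨fun i j hij => h1 hij, h2⟩
    · rintro ⟨h1, h2⟩
      exact ⟨fun i j hij => h1 i j hij, h2⟩
  rw [h]
  refine MeasurableSet.inter ?_ ?_
  · refine MeasurableSet.iInter fun i => MeasurableSet.iInter fun j =>
      MeasurableSet.iInter fun _ => ?_
    exact measurableSet_le (measurable_pi_apply _) (measurable_pi_apply _)
  · refine MeasurableSet.iInter fun i => MeasurableSet.iInter fun j =>
      MeasurableSet.iInter fun _ => ?_
    by_cases hlt : σ i < σ j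
    · have : {x : Fin n → ℝ | x (σ i) = x (σ j) → σ i < σ j} = Set.univ := by
        ext x; simp [hlt]
      rw [this]; exact MeasurableSet.univ
    · have : {x : Fin n → ℝ | x (σ i) = x (σ j) → σ i < σ j} =
          {x : Fin n → ℝ | x (σ i) = x (σ j)}ᶜ := by
        ext x; simp only [Set.mem_setOf_eq, Set.mem_compl_iff]
        exact ⟨fun h he => hlt (h he), fun h he => absurd he h⟩
      rw [this]
      exact (measurableSet_eq_fun (f := fun x : Fin n → ℝ => x (σ i))
        (g := fun x : Fin n → ℝ => x (σ j)) (measurable_pi_apply _)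
        (measurable_pi_apply _)).compl

lemma measurable_sortVec {n : ℕ} : Measurable (sortVec (n := n)) := by
  intro s hs
  have h : sortVec ⁻¹' s = ⋃ σ : Equiv.Perm (Fin n),
      ({x : Fin n → ℝ | Tuple.sort x = σ} ∩ (fun x : Fin n → ℝ => x ∘ ⇑σ) ⁻¹' s) := by
    ext x
    simp only [Set.mem_preimage, Set.mem_iUnion, Set.mem_inter_iff, Set.mem_setOf_eq]
    constructor
    · intro hx
      exact ⟨Tuple.sort x, rfl, hx⟩
    · rintro ⟨σ, hσ, hx⟩
      simpa [sortVec, hσ] using hx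
  rw [h]
  refine MeasurableSet.iUnion fun σ => (measurableSet_sort_eq σ).inter ?_
  exact (measurable_pi_lambda _ fun i => measurable_pi_apply (σ i)) hs

lemma sortVec_comp_perm {n : ℕ} (x : Fin n → ℝ) (τ : Equiv.Perm (Fin n)) :
    sortVec (x ∘ ⇑τ) = sortVec x :=
  Tuple.comp_perm_comp_sort_eq_comp_sort

/-- If `X = (X_1,…,X_n)` is exchangeable with order statistics `Y = sortVec ∘ X` and
`g` is Borel with `E|g(X)| < ∞`, then for every `A ∈ σ(Y)`,
`∫_A g(X) dP = (1/n!) ∑_π ∫_A g(Y_{π(1)},…,Y_{π(n)}) dP`. -/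
theorem setIntegral_of_exchangeable_over_order_statistics_event
    {Ω : Type*} [MeasurableSpace Ω] (P : Measure Ω) [IsProbabilityMeasure P]
    {n : ℕ} (X : Ω → Fin n → ℝ) (hX : Measurable X)
    (hexch : ∀ π : Equiv.Perm (Fin n),
      Measure.map (fun ω => X ω ∘ ⇑π) P = Measure.map X P)
    (g : (Fin n → ℝ) → ℝ) (hg : Measurable g)
    (hint : Integrable (fun ω => g (X ω)) P)
    (A : Set Ω)
    (hA : MeasurableSet[MeasurableSpace.comap (fun ω => sortVec (X ω)) inferInstance] A) :
    ∫ ω in A, g (X ω) ∂P =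
      ((n.factorial : ℝ))⁻¹ *
        ∑ π : Equiv.Perm (Fin n), ∫ ω in A, g (sortVec (X ω) ∘ ⇑π) ∂P := by
  obtain ⟨B, hB, rfl⟩ := hA
  set Y : Ω → Fin n → ℝ := fun ω => sortVec (X ω) with hYdef
  have hY : Measurable Y := measurable_sortVec.comp hX
  have hAmeas : MeasurableSet ((fun ω => sortVec (X ω)) ⁻¹' B) := hY hB
  -- the indicator function
  set F : (Fin n → ℝ) → ℝ := (sortVec ⁻¹' B).indicator g with hFdef
  have hF : Measurable F := hg.indicator (measurable_sortVec hB)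
  have hXτ : ∀ τ : Equiv.Perm (Fin n), Measurable (fun ω => X ω ∘ ⇑τ) := fun τ =>
    (measurable_pi_lambda _ fun i => measurable_pi_apply (τ i)).comp hX
  -- step 1: each X∘τ set-integral equals the X one
  have step1 : ∀ τ : Equiv.Perm (Fin n),
      ∫ ω in (fun ω => sortVec (X ω)) ⁻¹' B, g (X ω ∘ ⇑τ) ∂P =
      ∫ ω in (fun ω => sortVec (X ω)) ⁻¹' B, g (X ω) ∂P := by
    intro τ
    have hind : ∀ τ : Equiv.Perm (Fin n),
        (fun ω => F (X ω ∘ ⇑τ)) =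
          ((fun ω => sortVec (X ω)) ⁻¹' B).indicator fun ω => g (X ω ∘ ⇑τ) := by
      intro τ
      ext ω
      by_cases h : sortVec (X ω) ∈ B <;>
        simp [hFdef, Set.indicator_apply, Set.mem_preimage, sortVec_comp_perm, h]
    have e1 : ∫ ω in (fun ω => sortVec (X ω)) ⁻¹' B, g (X ω ∘ ⇑τ) ∂P
        = ∫ ω, F (X ω ∘ ⇑τ) ∂P := by
      rw [hind τ, integral_indicator hAmeas]
    have e2 : ∫ ω in (fun ω => sortVec (X ω)) ⁻¹' B, g (X ω) ∂P
        = ∫ ω, F (X ω) ∂P := by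
      have := hind 1
      simp only [Equiv.Perm.coe_one, Function.comp_id] at this
      rw [this, integral_indicator hAmeas]
    rw [e1, e2,
      ← integral_map (hXτ τ).aemeasurable hF.aestronglyMeasurable,
      hexch τ,
      integral_map hX.aemeasurable hF.aestronglyMeasurable]
  -- integrability of each g (X ∘ τ)
  have hintτ : ∀ τ : Equiv.Perm (Fin n), Integrable (fun ω => g (X ω ∘ ⇑τ)) P := by
    intro τ
    have h1 : Integrable g (Measure.map X P) :=
      (integrable_map_measure hg.aestronglyMeasurable hX.aemeasurable).mpr hint
    rw [← hexch τ] at h1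
    exact (integrable_map_measure hg.aestronglyMeasurable (hXτ τ).aemeasurable).mp h1
  -- measurability and integrability of each g (Y ∘ π)
  have hYπ : ∀ π : Equiv.Perm (Fin n), Measurable (fun ω => g (sortVec (X ω) ∘ ⇑π)) := by
    intro π
    exact hg.comp ((measurable_pi_lambda _ fun i => measurable_pi_apply (π i)).comp hY)
  have hYeq : ∀ (ω) (π : Equiv.Perm (Fin n)),
      sortVec (X ω) ∘ ⇑π = X ω ∘ ⇑(Tuple.sort (X ω) * π) := by
    intro ω π
    simp [sortVec, Equiv.Perm.coe_mul, Function.comp_assoc]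
  have hintYπ : ∀ π : Equiv.Perm (Fin n),
      Integrable (fun ω => g (sortVec (X ω) ∘ ⇑π)) P := by
    intro π
    refine Integrable.mono' (integrable_finset_sum Finset.univ
      (fun τ _ => (hintτ τ).abs)) (hYπ π).aestronglyMeasurable ?_
    filter_upwards with ω
    rw [hYeq ω π, Real.norm_eq_abs]
    exact Finset.single_le_sum (f := fun τ : Equiv.Perm (Fin n) => |g (X ω ∘ ⇑τ)|)
      (fun τ _ => abs_nonneg _) (Finset.mem_univ _)
  -- pointwise sum identity
  have hsum : ∀ ω, ∑ π : Equiv.Perm (Fin n), g (sortVec (X ω) ∘ ⇑π)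
      = ∑ τ : Equiv.Perm (Fin n), g (X ω ∘ ⇑τ) := by
    intro ω
    calc ∑ π : Equiv.Perm (Fin n), g (sortVec (X ω) ∘ ⇑π)
        = ∑ π : Equiv.Perm (Fin n), g (X ω ∘ ⇑(Tuple.sort (X ω) * π)) := by
          simp only [hYeq]
      _ = ∑ τ : Equiv.Perm (Fin n), g (X ω ∘ ⇑τ) :=
          Equiv.sum_comp (Equiv.mulLeft (Tuple.sort (X ω)))
            (fun τ => g (X ω ∘ ⇑τ))
  -- put it together
  have key : ∑ π : Equiv.Perm (Fin n),
      ∫ ω in (fun ω => sortVec (X ω)) ⁻¹' B, g (sortVec (X ω) ∘ ⇑π) ∂P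
      = (n.factorial : ℝ) * ∫ ω in (fun ω => sortVec (X ω)) ⁻¹' B, g (X ω) ∂P := by
    rw [← integral_finset_sum _ (fun π _ => ((hintYπ π).restrict))]
    have : ∫ ω in (fun ω => sortVec (X ω)) ⁻¹' B,
        (∑ π : Equiv.Perm (Fin n), g (sortVec (X ω) ∘ ⇑π)) ∂P
        = ∫ ω in (fun ω => sortVec (X ω)) ⁻¹' B,
        (∑ τ : Equiv.Perm (Fin n), g (X ω ∘ ⇑τ)) ∂P := by
      refine integral_congr_ae ?_
      filter_upwards with ω using hsum ω
    rw [this, integral_finset_sum _ (fun τ _ => ((hintτ τ).restrict))]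
    simp only [step1]
    rw [Finset.sum_const, Finset.card_univ, Fintype.card_perm, Fintype.card_fin, nsmul_eq_mul]
  rw [key, ← mul_assoc, inv_mul_cancel₀ (by positivity), one_mul]
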